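/- The strengthening closure strclo(H) = { (s1,s2,ψ) | ∃ ψ' ⊆ ψ, (s1,s2,ψ') ∈ H } is compatible with the monotone functor feF, i.e., strclo ∘ feF ⊆ feF ∘ strclo (pointwise on sets of triples). -/
import Mathlib


/-- A labeled transition system: states, optional-event-labeled steps, an initial state. -/
structure LTS (S E : Type*) where
  init : S
  step : S → Option E → S → Prop

namespace LTS

/-- Silent transition. -/
def Silent {S E : Type*} (T : LTS S E) (s s' : S) : Prop := T.step s none s'

/-- `Obs T s e s'`: finitely many silent steps followed by an `e`-labeled step. -/
def Obs {S E : Type*} (T : LTS S E) (s : S) (e : E) (s' : S) : Prop :=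
  ∃ s'', Relation.ReflTransGen T.Silent s s'' ∧ T.step s'' (some e) s'

/-- `τ` is an (infinite) trace originating from state `s`. -/
def IsTraceFrom {S E : Type*} (T : LTS S E) (s : S) (τ : ℕ → E) : Prop :=
  ∃ π : ℕ → S, π 0 = s ∧ ∀ i, T.Obs (π i) (τ i) (π (i + 1))

end LTS

/-- Greatest fixed point of an operator on subsets. -/
def nuSet {A : Type*} (F : Set A → Set A) : Set A := ⋃₀ {R | R ⊆ F R}

/-- Prepend an event to an infinite trace. -/
def cons {E : Type*} (e : E) (τ : ℕ → E) : ℕ → E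
  | 0 => e
  | n + 1 => τ n

/-- The trace obtained by dropping the first letter. -/
def tail {E : Type*} (τ : ℕ → E) : ℕ → E := fun i => τ (i + 1)

/-- Concatenation of the length-`n` prefix of `τ` with the infinite trace `τ'`. -/
def pcat {E : Type*} (τ : ℕ → E) (n : ℕ) (τ' : ℕ → E) : ℕ → E :=
  fun i => if i < n then τ i else τ' (i - n)

/-- The safety closure of a binary trace relation. -/
def safeCl {E1 E2 : Type*} (ψ : Set ((ℕ → E1) × (ℕ → E2))) : Set ((ℕ → E1) × (ℕ → E2)) :=
  {p | ∀ n, ∃ (τ1' : ℕ → E1) (τ2' : ℕ → E2), (pcat p.1 n τ1', pcat p.2 n τ2') ∈ ψ}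

/-- The Brzozowski-style derivative of a binary trace relation. -/
def rderiv {E1 E2 : Type*} (e1 : E1) (e2 : E2) (ψ : Set ((ℕ → E1) × (ℕ → E2))) :
    Set ((ℕ → E1) × (ℕ → E2)) :=
  {p | (cons e1 p.1, cons e2 p.2) ∈ ψ}

/-- The `next` operator on pairs of states, relative to relation `R` on triples. -/
def nextOp {S1 S2 E1 E2 : Type*}
    (R : Set (S1 × S2 × Set ((ℕ → E1) × (ℕ → E2)))) (e1 : E1) (e2 : E2)
    (ψ : Set ((ℕ → E1) × (ℕ → E2))) : Set (S1 × S2) :=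
  {p | rderiv e1 e2 ψ ≠ ∅ ∧ (p.1, p.2, rderiv e1 e2 ψ) ∈ R}

/-- The functor underlying the coinductive relation `fe`. -/
def feF {S1 S2 E1 E2 : Type*} (T1 : LTS S1 E1) (T2 : LTS S2 E2)
    (R : Set (S1 × S2 × Set ((ℕ → E1) × (ℕ → E2)))) :
    Set (S1 × S2 × Set ((ℕ → E1) × (ℕ → E2))) :=
  {t | ∀ e1 s1', T1.Obs t.1 e1 s1' →
        ∃ e2 s2', T2.Obs t.2.1 e2 s2' ∧ (s1', s2') ∈ nextOp R e1 e2 t.2.2}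

/-- The strengthening closure: reason up to stronger trace relations. -/
def strclo {S1 S2 E1 E2 : Type*}
    (H : Set (S1 × S2 × Set ((ℕ → E1) × (ℕ → E2)))) :
    Set (S1 × S2 × Set ((ℕ → E1) × (ℕ → E2))) :=
  {t | ∃ ψ' ⊆ t.2.2, (t.1, t.2.1, ψ') ∈ H}

theorem strclo_compatible {S1 S2 E1 E2 : Type*} (T1 : LTS S1 E1) (T2 : LTS S2 E2)
    (R : Set (S1 × S2 × Set ((ℕ → E1) × (ℕ → E2)))) :
    strclo (feF T1 T2 R) ⊆ feF T1 T2 (strclo R) := by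
  rintro ⟨s1, s2, ψ⟩ ⟨ψ', hsub, hF⟩ e1 s1' hobs
  obtain ⟨e2, s2', hobs2, hne, hR⟩ := hF e1 s1' hobs
  have hdsub : rderiv e1 e2 ψ' ⊆ rderiv e1 e2 ψ := fun p hp => hsub hp
  refine ⟨e2, s2', hobs2, ?_, ⟨rderiv e1 e2 ψ', hdsub, hR⟩⟩
  intro h
  exact hne (Set.subset_eq_empty (h ▸ hdsub) rfl)
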